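/- arXiv:1010.5835 — 5 statements merged into one kernel-verified Lean document; each statement's English description precedes it below -/
import Mathlib

section
/- Let $k$ be a field of characteristic $2$ containing an element $\omega$ with $\omega^2 + \omega + 1 = 0$, and let $E$ be the Weierstrass curve $y^2 + y = x^3$ over $k$. Define on affine points $\sigma(x,y) = (\omega x, y)$, $\sigma^2(x,y) = (\omega^2 x, y)$ and $\theta(x,y) = (x+1,\ y + x + \omega)$. Then for every affine point $P = (x,y)$ of $E$, the identity $\mathrm{id}_E = \theta\circ\sigma - \sigma^2\circ\theta$ holds in the group of points of $E$: namely, $(\omega x + 1,\ y + \omega x + \omega) - (\omega^2(x+1),\ y + x + \omega) = (x, y)$, where both displayed points are affine points of $E$. -/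
def E2 (k : Type*) [CommRing k] : WeierstrassCurve.Affine k :=
  { a₁ := 0, a₂ := 0, a₃ := 1, a₄ := 0, a₆ := 0 }

open WeierstrassCurve.Affine

lemma E2_a₁ (k : Type*) [CommRing k] : (E2 k).a₁ = 0 := rfl
lemma E2_a₂ (k : Type*) [CommRing k] : (E2 k).a₂ = 0 := rfl
lemma E2_a₃ (k : Type*) [CommRing k] : (E2 k).a₃ = 1 := rfl
lemma E2_a₄ (k : Type*) [CommRing k] : (E2 k).a₄ = 0 := rfl
lemma E2_a₆ (k : Type*) [CommRing k] : (E2 k).a₆ = 0 := rfl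

lemma E2_some_eq {k : Type*} [Field k] {x₁ y₁ x₂ y₂ : k}
    (h₁ : (E2 k).Nonsingular x₁ y₁) (h₂ : (E2 k).Nonsingular x₂ y₂)
    (hx : x₁ = x₂) (hy : y₁ = y₂) : Point.some _ _ h₁ = Point.some _ _ h₂ := by
  subst hx; subst hy; rfl

lemma E2_ns {k : Type*} [Field k] [CharP k 2] {a b : k} (hab : b ^ 2 + b = a ^ 3) :
    (E2 k).Nonsingular a b := by
  have h2 : (2 : k) = 0 := by exact_mod_cast CharP.cast_eq_zero k 2
  rw [nonsingular_iff, equation_iff, E2_a₁, E2_a₂, E2_a₃, E2_a₄, E2_a₆]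
  refine ⟨by linear_combination hab, Or.inr fun hc => one_ne_zero (α := k) ?_⟩
  linear_combination hc - b * h2

open Classical in
/-- On the curve `y² + y = x³` over a field of characteristic `2` containing a primitive cube
root of unity `ω`, the identity `id = θ∘σ - σ²∘θ` holds, where `σ(x, y) = (ωx, y)` and
`θ(x, y) = (x + 1, y + x + ω)`: for every affine point `(x, y)` one has
`(ωx + 1, y + ωx + ω) - (ω²(x + 1), y + x + ω) = (x, y)` in the group of points. -/
theorem id_eq_theta_sigma_sub_sigma_sq_theta (k : Type*) [Field k] [CharP k 2]
    (ω : k) (hω : ω ^ 2 + ω + 1 = 0) (x y : k) (h : (E2 k).Nonsingular x y) :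
    ∃ (hA : (E2 k).Nonsingular (ω * x + 1) (y + ω * x + ω))
      (hB : (E2 k).Nonsingular (ω ^ 2 * (x + 1)) (y + x + ω)),
      Point.some _ _ hA - Point.some _ _ hB = Point.some _ _ h := by
  have h2 : (2 : k) = 0 := by exact_mod_cast CharP.cast_eq_zero k 2
  have heq : y ^ 2 + y = x ^ 3 := by
    have := (equation_iff (W := E2 k) x y).mp h.1
    rw [E2_a₁, E2_a₂, E2_a₃, E2_a₄, E2_a₆] at this
    linear_combination this
  have hA : (E2 k).Nonsingular (ω * x + 1) (y + ω * x + ω) := E2_ns (by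
    linear_combination (1 + 2*x - 2*x^2 + x^3 - ω*x^3) * hω + heq +
      (-1 - x + x^2 + ω*y - 2*ω*x + ω*x*y + ω*x^2) * h2)
  have hB : (E2 k).Nonsingular (ω ^ 2 * (x + 1)) (y + x + ω) := E2_ns (by
    linear_combination (2 + 3*x + 3*x^2 + x^3 - ω - 3*ω*x - 3*ω*x^2 - ω*x^3 + ω^3 + 3*ω^3*x
        + 3*ω^3*x^2 + ω^3*x^3 - ω^4 - 3*ω^4*x - 3*ω^4*x^2 - ω^4*x^3) * hω + heq +
      (-1 - x + x*y - x^2 + ω*y + ω*x) * h2)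
  refine ⟨hA, hB, ?_⟩
  rw [sub_eq_add_neg, Point.neg_some]
  -- hypotheses for add_of_imp
  have hxy : ω * x + 1 = ω ^ 2 * (x + 1) →
      y + ω * x + ω ≠ (E2 k).negY (ω ^ 2 * (x + 1)) ((E2 k).negY (ω ^ 2 * (x + 1)) (y + x + ω)) := by
    intro hx12 hy
    rw [negY_negY] at hy
    -- hy : y + ω*x + ω = y + x + ω ; hx12 gives x = ω ; contradiction
    exact one_ne_zero (α := k) (by
      linear_combination (ω + 1) * hx12 + hy + (-x + ω + ω*x) * hω + (x - ω - ω*x) * h2)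
  rw [Point.add_some (fun hc => hxy hc.1 hc.2)]
  have hL : (E2 k).slope (ω * x + 1) (ω ^ 2 * (x + 1)) (y + ω * x + ω)
      ((E2 k).negY (ω ^ 2 * (x + 1)) (y + x + ω)) = ω ^ 2 := by
    by_cases hx : ω * x + 1 = ω ^ 2 * (x + 1)
    · have hxo : x = ω := by
        linear_combination hx + (1 + x) * hω + (-1 - ω - ω*x) * h2
      subst hxo
      rw [slope_of_Y_ne hx (hxy hx), negY, E2_a₁, E2_a₂, E2_a₃, E2_a₄, div_eq_iff
        (fun hc => one_ne_zero (α := k) (by linear_combination hc - (y + x*x + x) * h2))]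
      linear_combination (7 - 2*y - 3*x + x^2) * hω + (-2 + y - 2*x + x*y) * h2
    · rw [slope_of_X_ne hx, div_eq_iff (sub_ne_zero.mpr hx), negY, E2_a₁, E2_a₃]
      linear_combination (-1 + x - ω - 2*ω*x + ω^2 + ω^2*x) * hω + (1 + y + 2*ω + ω*x) * h2
  apply E2_some_eq
  · rw [hL, addX, E2_a₁, E2_a₂]
    linear_combination (-1 - x - ω + ω^2) * hω + ω * h2
  · rw [hL, addY, negAddY, addX, negY, E2_a₁, E2_a₂, E2_a₃]
    linear_combination (3 - 2*x - 2*ω + ω*x + ω^2 + ω^2*x + ω^3 - ω^4) * hω +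
      (-2 - y + x - ω) * h2
end

section
/- Let $k$ be a field of characteristic $2$ containing an element $\omega$ with $\omega^2 + \omega + 1 = 0$, and let $E$ be the Weierstrass curve $y^2 + y = x^3$ over $k$. Define on affine points $\sigma(x,y) = (\omega x, y)$ and $\theta(x,y) = (x+1,\ y + x + \omega)$, and let $F$ denote the Frobenius map $F(x,y) = (x^2, y^2)$. Then for every affine point $P = (x,y)$ of $E$, the relation $F = \sigma\circ\theta - \theta\circ\sigma$ holds in the group of points of $E$: namely, $(\omega(x+1),\ y + x + \omega) - (\omega x + 1,\ y + \omega x + \omega) = (x^2, y^2)$, where all displayed points are affine points of $E$. -/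
open WeierstrassCurve.Affine

open Classical in
/-- On the curve `y² + y = x³` over a field of characteristic `2` containing a primitive cube
root of unity `ω`, the identity `F = σ∘θ - θ∘σ` holds, where `σ(x, y) = (ωx, y)`,
`θ(x, y) = (x + 1, y + x + ω)` and `F(x, y) = (x², y²)` is the Frobenius: for every affine
point `(x, y)` one has `(ω(x + 1), y + x + ω) - (ωx + 1, y + ωx + ω) = (x², y²)` in the group
of points. -/
theorem frobenius_eq_sigma_theta_sub_theta_sigma (k : Type*) [Field k] [CharP k 2]
    (ω : k) (hω : ω ^ 2 + ω + 1 = 0) (x y : k) (h : (E2 k).Nonsingular x y) :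
    ∃ (hA : (E2 k).Nonsingular (ω * (x + 1)) (y + x + ω))
      (hB : (E2 k).Nonsingular (ω * x + 1) (y + ω * x + ω))
      (hC : (E2 k).Nonsingular (x ^ 2) (y ^ 2)),
      Point.some _ _ hA - Point.some _ _ hB = Point.some _ _ hC := by
  have h2 : (2 : k) = 0 := by exact_mod_cast CharP.cast_eq_zero k 2
  have h1 : (1 : k) ≠ 0 := one_ne_zero
  rw [nonsingular_iff, equation_iff] at h
  have heq : y ^ 2 + y = x ^ 3 := by
    have := h.1
    simp only [E2] at this
    linear_combination this
  have hy2 : ∀ a b : k, b ≠ -b - (E2 k).a₁ * a - (E2 k).a₃ := by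
    intro a b hb
    simp only [E2] at hb
    apply h1
    linear_combination hb - b * h2
  have hA : (E2 k).Nonsingular (ω * (x + 1)) (y + x + ω) := by
    rw [nonsingular_iff, equation_iff]
    refine ⟨?_, Or.inr (hy2 _ _)⟩
    simp only [E2]
    linear_combination heq + (1 - (ω - 1) * (x + 1) ^ 3) * hω +
      (x * y + ω * y + ω * x - x ^ 2 - x - 1) * h2
  have hB : (E2 k).Nonsingular (ω * x + 1) (y + ω * x + ω) := by
    rw [nonsingular_iff, equation_iff]
    refine ⟨?_, Or.inr (hy2 _ _)⟩
    simp only [E2]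
    linear_combination heq + (1 - (ω - 1) * x ^ 3) * hω +
      (ω * x * y + ω * y + ω ^ 2 * x - ω ^ 2 * x ^ 2 - ω * x - 1) * h2
  have hC : (E2 k).Nonsingular (x ^ 2) (y ^ 2) := by
    rw [nonsingular_iff, equation_iff]
    refine ⟨?_, Or.inr (hy2 _ _)⟩
    simp only [E2]
    linear_combination (y ^ 2 + y + x ^ 3) * heq - y ^ 3 * h2
  refine ⟨hA, hB, hC, ?_⟩
  have hωne : ω + 1 ≠ 0 := by
    intro hw
    apply h1
    linear_combination hω - ω * hw
  have hx : ω * (x + 1) ≠ ω * x + 1 := by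
    intro hh
    apply hωne
    linear_combination hh + h2
  rw [sub_eq_add_neg, Point.neg_some, Point.add_of_X_ne hx]
  have hL : (E2 k).slope (ω * (x + 1)) (ω * x + 1) (y + x + ω)
      ((E2 k).negY (ω * x + 1) (y + ω * x + ω)) = x + ω := by
    rw [slope_of_X_ne hx]
    simp only [E2, negY]
    rw [div_eq_iff (sub_ne_zero.mpr hx)]
    linear_combination (y + x + ω - ω ^ 2) * h2 + hω
  simp only [Point.some.injEq]
  rw [hL]
  constructor
  · simp only [E2, addX]
    linear_combination hω - (ω + 1) * h2
  · simp only [E2, addY, negAddY, addX, negY]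
    linear_combination -heq - (ω - 1) * hω + (-x ^ 3 + ω * x + ω ^ 2 - 1) * h2
end

section
/- Let $k$ be a field of characteristic $2$ containing an element $\omega$ with $\omega^2 + \omega + 1 = 0$. Suppose $x, y \in k$ satisfy $y^2 + y = x^3$ and $x \neq 0$. Set $w = (x^3 + 1)/x^2$ and $z = y + 1 + x^{-3} + \omega$. Then $z^2 + z = w^3$. (Thus the quotient of the curve $y^2+y=x^3$ by the translation $\tau$ by the $3$-torsion point $(0,0)$ is again the curve $z^2 + z = w^3$.) -/
/-- Over a field of characteristic `2` containing a primitive cube root of unity `ω`, if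
`y² + y = x³` and `x ≠ 0`, then `w = (x³ + 1)/x²` and `z = y + 1 + x⁻³ + ω` satisfy
`z² + z = w³`: the quotient of the curve `y² + y = x³` by translation by the 3-torsion point
`(0, 0)` is again the curve `z² + z = w³`. -/
theorem quotient_curve_equation (k : Type*) [Field k] [CharP k 2]
    (ω : k) (hω : ω ^ 2 + ω + 1 = 0) (x y : k) (h : y ^ 2 + y = x ^ 3) (hx : x ≠ 0) :
    (y + 1 + (x ^ 3)⁻¹ + ω) ^ 2 + (y + 1 + (x ^ 3)⁻¹ + ω) = ((x ^ 3 + 1) / x ^ 2) ^ 3 := by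
  have h2 : (2 : k) = 0 := by
    have := CharP.cast_eq_zero k 2; simpa using this
  have hw : ω ^ 2 + ω = 1 := by linear_combination hω - h2
  have hi : x ^ 3 * (x ^ 3)⁻¹ = 1 := mul_inv_cancel₀ (pow_ne_zero 3 hx)
  have key : (y + 1 + (x ^ 3)⁻¹ + ω) ^ 2 + (y + 1 + (x ^ 3)⁻¹ + ω)
      = x ^ 3 + (x ^ 3)⁻¹ + ((x ^ 3)⁻¹) ^ 2 + 1 := by
    linear_combination h + hw +
      (1 + y + y * (x ^ 3)⁻¹ + y * ω + (x ^ 3)⁻¹ + ω + (x ^ 3)⁻¹ * ω) * h2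
  rw [key, div_pow, eq_div_iff (pow_ne_zero 3 (pow_ne_zero 2 hx))]
  linear_combination (x ^ 3 + x ^ 3 * (x ^ 3)⁻¹ + 1) * hi - (x ^ 6 + x ^ 3) * h2
end

section
/- Let $k$ be a field of characteristic $2$ containing an element $\omega$ with $\omega^2 + \omega + 1 = 0$. Suppose $x, y \in k$ satisfy $y^2 + y = x^3$, $x \neq 0$ and $y \neq 0$, and set $x' = y/x^2$, $y' = y/x^3$. Then the functions $w = (x^3+1)/x^2$ and $z = y + 1 + x^{-3} + \omega$ are invariant under the substitution $(x,y) \mapsto (x', y')$: namely $(x'^3 + 1)/x'^2 = (x^3+1)/x^2$ and $y' + 1 + x'^{-3} + \omega = y + 1 + x^{-3} + \omega$. -/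
/-- Over a field of characteristic `2` containing a primitive cube root of unity `ω`, the
functions `w = (x³ + 1)/x²` and `z = y + 1 + x⁻³ + ω` on the curve `y² + y = x³` are invariant
under the translation `(x, y) ↦ (y/x², y/x³)` by the 3-torsion point `(0, 0)`. -/
theorem w_z_invariant_under_translation (k : Type*) [Field k] [CharP k 2]
    (ω : k) (hω : ω ^ 2 + ω + 1 = 0) (x y : k) (h : y ^ 2 + y = x ^ 3)
    (hx : x ≠ 0) (hy : y ≠ 0) :
    ((y / x ^ 2) ^ 3 + 1) / (y / x ^ 2) ^ 2 = (x ^ 3 + 1) / x ^ 2 ∧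
    y / x ^ 3 + 1 + ((y / x ^ 2) ^ 3)⁻¹ + ω = y + 1 + (x ^ 3)⁻¹ + ω := by
  have h2 : (2:k) = 0 := by exact_mod_cast CharP.cast_eq_zero k 2
  constructor <;> field_simp
  · linear_combination (-(y+x^3))*h + y^3*h2
  · linear_combination (-(x^6 + (y^2+y)*x^3 + 2*y^3 + y^2))*h + (y^5+2*y^4)*h2
end

section
/- Let $k$ be a field of characteristic $2$ and let $E$ be the Weierstrass curve $y^2 + y = x^3$ over $k$. An affine point $P = (x, y)$ of $E$ satisfies $3 \cdot P = 0$ in the group of points of $E$ if and only if $x^4 = x$ and $y^4 = y$. (Thus the $3$-torsion points of $E$ are exactly the point at infinity together with the points whose coordinates lie in $\mathbf{F}_4$.) -/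
open WeierstrassCurve.Affine

private lemma point_some_eq_some_iff {R : Type*} [CommRing R] {W : WeierstrassCurve.Affine R}
    {x₁ y₁ x₂ y₂ : R} (h₁ : W.Nonsingular x₁ y₁) (h₂ : W.Nonsingular x₂ y₂) :
    Point.some x₁ y₁ h₁ = Point.some x₂ y₂ h₂ ↔ x₁ = x₂ ∧ y₁ = y₂ := by
  constructor
  · intro hh
    injection hh with h1 h2
    exact ⟨h1, h2⟩
  · rintro ⟨rfl, rfl⟩; rfl

open Classical in
/-- On the curve `y² + y = x³` over a field of characteristic `2`, an affine point `(x, y)` is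
a 3-torsion point if and only if `x⁴ = x` and `y⁴ = y`, i.e. if and only if its coordinates
lie in `𝔽₄`. -/
theorem three_torsion_iff (k : Type*) [Field k] [CharP k 2] (x y : k)
    (h : (E2 k).Nonsingular x y) :
    (3 : ℕ) • Point.some x y h = 0 ↔ x ^ 4 = x ∧ y ^ 4 = y := by
  have h2 : (2 : k) = 0 := by exact_mod_cast CharP.cast_eq_zero k 2
  have heq : y ^ 2 + y = x ^ 3 := by
    have := ((E2 k).equation_iff x y).mp h.1
    simp only [E2] at this
    linear_combination this
  have hy : y ≠ (E2 k).negY x y := by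
    simp only [negY, E2]
    intro hc
    apply one_ne_zero (α := k)
    linear_combination -hc + 2 * h2 * y + h2 - h2 * y
  have hL : (E2 k).slope x x y y = x ^ 2 := by
    rw [slope_of_Y_ne rfl hy]
    simp only [E2, negY]
    have hden : y - (-y - 0 * x - 1) = 1 := by linear_combination y * h2
    rw [hden, div_one]
    linear_combination x ^ 2 * h2
  have hX : (E2 k).addX x x (x ^ 2) = x ^ 4 := by
    simp only [WeierstrassCurve.Affine.addX, E2]
    linear_combination -x * h2
  have hY : (E2 k).addY x x y (x ^ 2) = x ^ 6 + x ^ 3 + y + 1 := by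
    simp only [WeierstrassCurve.Affine.addY, WeierstrassCurve.Affine.negAddY,
      WeierstrassCurve.Affine.addX, negY, E2]
    ring_nf
    linear_combination (-x ^ 6 + x ^ 3 - y - 1) * h2
  have hnegY : (E2 k).negY x y = y + 1 := by
    simp only [negY, E2]
    linear_combination -(y + 1) * h2
  rw [show (3 : ℕ) • Point.some x y h = Point.some x y h + Point.some x y h + Point.some x y h by
    rw [succ_nsmul, two_nsmul],
    Point.add_self_of_Y_ne hy, add_eq_zero_iff_eq_neg, Point.neg_some,
    point_some_eq_some_iff, hL, hX, hY, hnegY]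
  constructor
  · rintro ⟨hx4, -⟩
    refine ⟨hx4, ?_⟩
    linear_combination (y ^ 2 - y + 1 + x ^ 3) * heq + x ^ 2 * hx4 +
      (x ^ 3 - x ^ 3 * y - y) * h2
  · rintro ⟨hx4, -⟩
    refine ⟨hx4, ?_⟩
    linear_combination x ^ 2 * hx4 + x ^ 3 * h2
end
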